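/- arXiv:1304.1839 — 2 statements merged into one kernel-verified Lean document; each statement's English description precedes it below -/
import Mathlib

section
/- The map α is injective up to a global phase if and only if for every nonzero ξ ∈ ℝ^{2n}, the matrix R(ξ) has rank exactly 2n − 1. -/
open scoped BigOperators ComplexConjugate
open Matrix

noncomputable section

/-- Inner product on `ℂⁿ`, linear in the first argument: `⟨x,y⟩ = ∑ⱼ xⱼ conj(yⱼ)`. -/
def cip {n : ℕ} (x y : Fin n → ℂ) : ℂ := ∑ j, x j * (starRingEnd ℂ) (y j)

/-- Squared Euclidean norm on `ℂⁿ`. -/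
def cnSq {n : ℕ} (x : Fin n → ℂ) : ℝ := ∑ j, Complex.normSq (x j)

/-- The phaseless measurement map `α(x)ₖ = |⟨x,fₖ⟩|²`. -/
def alphaMap {n m : ℕ} (f : Fin m → Fin n → ℂ) (x : Fin n → ℂ) : Fin m → ℝ :=
  fun k => Complex.normSq (cip x (f k))

/-- `α` is injective up to a global phase. -/
def InjUpToPhase {n m : ℕ} (f : Fin m → Fin n → ℂ) : Prop :=
  ∀ x y : Fin n → ℂ, alphaMap f x = alphaMap f y → ∃ c : ℂ, ‖c‖ = 1 ∧ y = c • x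

/-- Identification `ι : ℂⁿ → ℝ²ⁿ`, `ι(x) = (Re x, Im x)`. -/
def iotaR {n : ℕ} (x : Fin n → ℂ) : Fin n ⊕ Fin n → ℝ :=
  Sum.elim (fun j => (x j).re) (fun j => (x j).im)

/-- The `2n×2n` matrix `J = [[0, −Iₙ],[Iₙ, 0]]`. -/
def Jmat (n : ℕ) : Matrix (Fin n ⊕ Fin n) (Fin n ⊕ Fin n) ℝ :=
  Matrix.fromBlocks 0 (-1) 1 0

/-- `Φₖ = φₖφₖᵀ + Jφₖφₖᵀ Jᵀ` with `φₖ = ι(fₖ)`. -/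
def PhiMat {n : ℕ} (fk : Fin n → ℂ) : Matrix (Fin n ⊕ Fin n) (Fin n ⊕ Fin n) ℝ :=
  Matrix.vecMulVec (iotaR fk) (iotaR fk)
    + Jmat n * Matrix.vecMulVec (iotaR fk) (iotaR fk) * (Jmat n)ᵀ

/-- `R(ξ) = ∑ₖ Φₖ ξξᵀ Φₖ`. -/
def Rmat {n m : ℕ} (f : Fin m → Fin n → ℂ) (ξ : Fin n ⊕ Fin n → ℝ) :
    Matrix (Fin n ⊕ Fin n) (Fin n ⊕ Fin n) ℝ :=
  ∑ k, PhiMat (f k) * Matrix.vecMulVec ξ ξ * PhiMat (f k)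

/-! ### Auxiliary lemmas -/

section Aux

variable {n m : ℕ}

lemma cip_conj (x y : Fin n → ℂ) : cip y x = (starRingEnd ℂ) (cip x y) := by
  simp only [cip, map_sum]
  exact Finset.sum_congr rfl fun j _ => by
    rw [RingHom.map_mul, Complex.conj_conj]; ring

lemma cip_sub_left (x y z : Fin n → ℂ) : cip (x - y) z = cip x z - cip y z := by
  simp [cip, sub_mul, Finset.sum_sub_distrib]

lemma cip_add_left (x y z : Fin n → ℂ) : cip (x + y) z = cip x z + cip y z := by
  simp [cip, add_mul, Finset.sum_add_distrib]

lemma cip_smul_left (c : ℂ) (x y : Fin n → ℂ) : cip (c • x) y = c * cip x y := by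
  simp [cip, Finset.mul_sum, mul_assoc]

lemma cip_smul_right (c : ℂ) (x y : Fin n → ℂ) :
    cip x (c • y) = (starRingEnd ℂ) c * cip x y := by
  simp only [cip, Pi.smul_apply, smul_eq_mul, Finset.mul_sum]
  exact Finset.sum_congr rfl fun j _ => by
    rw [RingHom.map_mul]; ring

def toC {n : ℕ} (ξ : Fin n ⊕ Fin n → ℝ) : Fin n → ℂ :=
  fun j => ⟨ξ (Sum.inl j), ξ (Sum.inr j)⟩

lemma iotaR_toC (ξ : Fin n ⊕ Fin n → ℝ) : iotaR (toC ξ) = ξ := by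
  funext i; cases i <;> rfl

lemma iotaR_inj {x y : Fin n → ℂ} (h : iotaR x = iotaR y) : x = y := by
  funext j
  exact Complex.ext (congrFun h (Sum.inl j)) (congrFun h (Sum.inr j))

lemma iotaR_zero : iotaR (0 : Fin n → ℂ) = 0 := by
  funext i; cases i <;> simp [iotaR]

lemma iotaR_real_smul (r : ℝ) (x : Fin n → ℂ) : iotaR (r • x) = r • iotaR x := by
  funext i; cases i <;> simp [iotaR, Complex.real_smul, Complex.mul_re, Complex.mul_im]

lemma dot_iotaR (x y : Fin n → ℂ) : iotaR x ⬝ᵥ iotaR y = (cip x y).re := by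
  simp only [dotProduct, cip, Complex.re_sum, Fintype.sum_sum_type, iotaR, Sum.elim_inl,
    Sum.elim_inr, Complex.mul_re, Complex.conj_re, Complex.conj_im]
  rw [← Finset.sum_add_distrib]
  exact Finset.sum_congr rfl fun j _ => by ring

lemma vecMulVec_mulVec' (a b w : Fin n ⊕ Fin n → ℝ) :
    (Matrix.vecMulVec a b).mulVec w = (b ⬝ᵥ w) • a := by
  funext i
  simp only [Matrix.mulVec, Matrix.vecMulVec_apply, dotProduct, Pi.smul_apply, smul_eq_mul,
    Finset.sum_mul]
  exact Finset.sum_congr rfl fun j _ => by ring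

lemma Jmat_transpose : (Jmat n)ᵀ = -(Jmat n) := by
  simp [Jmat, Matrix.fromBlocks_transpose, Matrix.fromBlocks_neg]

lemma Jmat_mulVec (x : Fin n → ℂ) :
    (Jmat n).mulVec (iotaR x) = iotaR (Complex.I • x) := by
  funext i
  cases i with
  | inl j =>
      simp [Jmat, Matrix.mulVec, dotProduct, Fintype.sum_sum_type, iotaR,
        Matrix.one_apply, Complex.mul_re, Finset.sum_ite_eq]
  | inr j =>
      simp [Jmat, Matrix.mulVec, dotProduct, Fintype.sum_sum_type, iotaR,
        Matrix.one_apply, Complex.mul_im, Finset.sum_ite_eq]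

lemma iotaR_csmul (z : ℂ) (x : Fin n → ℂ) :
    iotaR (z • x) = z.re • iotaR x + z.im • iotaR (Complex.I • x) := by
  funext i
  cases i <;> simp [iotaR, Complex.mul_re, Complex.mul_im] <;> ring

lemma vecMulVec_tr (a b : Fin n ⊕ Fin n → ℝ) :
    (Matrix.vecMulVec a b)ᵀ = Matrix.vecMulVec b a := by
  ext i j; simp [Matrix.vecMulVec_apply, mul_comm]

lemma PhiMat_symm (fk : Fin n → ℂ) : (PhiMat fk)ᵀ = PhiMat fk := by
  simp [PhiMat, Matrix.transpose_add, Matrix.transpose_mul, Matrix.transpose_transpose,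
    vecMulVec_tr, Matrix.mul_assoc]

lemma PhiMat_mulVec (fk u : Fin n → ℂ) :
    (PhiMat fk).mulVec (iotaR u) = iotaR ((cip u fk) • fk) := by
  have h1 : ((Jmat n)ᵀ).mulVec (iotaR u) = -iotaR (Complex.I • u) := by
    rw [Jmat_transpose, Matrix.neg_mulVec, Jmat_mulVec]
  have h2 : (Matrix.vecMulVec (iotaR fk) (iotaR fk)).mulVec (-iotaR (Complex.I • u))
      = (-(cip fk (Complex.I • u)).re) • iotaR fk := by
    rw [show (-iotaR (Complex.I • u)) = ((-1 : ℝ) • iotaR (Complex.I • u)) by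
      funext i; simp, Matrix.mulVec_smul, vecMulVec_mulVec', dot_iotaR, smul_smul]
    norm_num
  have h3 : (cip fk u).re = (cip u fk).re := by rw [cip_conj]; simp
  have h4 : (-(cip fk (Complex.I • u)).re) = (cip u fk).im := by
    rw [cip_smul_right, cip_conj]
    simp [Complex.mul_re]
  rw [PhiMat, Matrix.add_mulVec, ← Matrix.mulVec_mulVec, ← Matrix.mulVec_mulVec, h1,
    vecMulVec_mulVec', h2, Matrix.mulVec_smul, Jmat_mulVec, dot_iotaR, h3, h4]
  conv_rhs => rw [iotaR_csmul]

lemma sandwich (P : Matrix (Fin n ⊕ Fin n) (Fin n ⊕ Fin n) ℝ) (hP : Pᵀ = P)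
    (ξ : Fin n ⊕ Fin n → ℝ) :
    P * Matrix.vecMulVec ξ ξ * P = Matrix.vecMulVec (P.mulVec ξ) (P.mulVec ξ) := by
  ext i j
  have hsym : ∀ a b, P a b = P b a := fun a b => by
    conv_lhs => rw [← hP, Matrix.transpose_apply]
  have hVP : ∀ p, (Matrix.vecMulVec ξ ξ * P) p j = ξ p * P.mulVec ξ j := by
    intro p
    rw [Matrix.mul_apply, Matrix.mulVec, dotProduct, Finset.mul_sum]
    exact Finset.sum_congr rfl fun q _ => by rw [Matrix.vecMulVec_apply, hsym q j]; ring
  rw [Matrix.mul_assoc, Matrix.mul_apply, Matrix.vecMulVec_apply, Matrix.mulVec, dotProduct,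
    Finset.sum_mul]
  exact Finset.sum_congr rfl fun p _ => by rw [hVP p, Matrix.mulVec, dotProduct]; ring

/-- The matrix whose `k`-th row is `Φₖ ξ`. -/
def Amat (f : Fin m → Fin n → ℂ) (ξ : Fin n ⊕ Fin n → ℝ) :
    Matrix (Fin m) (Fin n ⊕ Fin n) ℝ :=
  Matrix.of fun k => (PhiMat (f k)).mulVec ξ

lemma Rmat_eq (f : Fin m → Fin n → ℂ) (ξ : Fin n ⊕ Fin n → ℝ) :
    Rmat f ξ = (Amat f ξ)ᵀ * Amat f ξ := by
  rw [Rmat, show (∑ k, PhiMat (f k) * Matrix.vecMulVec ξ ξ * PhiMat (f k))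
      = ∑ k, Matrix.vecMulVec ((PhiMat (f k)).mulVec ξ) ((PhiMat (f k)).mulVec ξ) from
    Finset.sum_congr rfl fun k _ => sandwich _ (PhiMat_symm _) ξ]
  ext i j
  rw [Matrix.sum_apply, Matrix.mul_apply]
  exact Finset.sum_congr rfl fun k _ => by rw [Matrix.vecMulVec_apply]; rfl

lemma rank_nullity_Amat (f : Fin m → Fin n → ℂ) (ξ : Fin n ⊕ Fin n → ℝ) :
    (Amat f ξ).rank + Module.finrank ℝ (LinearMap.ker (Amat f ξ).mulVecLin) = 2 * n := by
  have h := LinearMap.finrank_range_add_finrank_ker (Amat f ξ).mulVecLin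
  rw [Matrix.rank, h, Module.finrank_pi]
  simp [two_mul]

lemma Amat_mulVec_apply (f : Fin m → Fin n → ℂ) (u w : Fin n → ℂ) (k : Fin m) :
    (Amat f (iotaR u)).mulVec (iotaR w) k = (cip u (f k) * cip (f k) w).re := by
  have h : (Amat f (iotaR u)).mulVec (iotaR w) k
      = (PhiMat (f k)).mulVec (iotaR u) ⬝ᵥ iotaR w := rfl
  rw [h, PhiMat_mulVec, dot_iotaR, cip_smul_left]

lemma mem_ker_Amat (f : Fin m → Fin n → ℂ) (u w : Fin n → ℂ) :
    iotaR w ∈ LinearMap.ker (Amat f (iotaR u)).mulVecLin ↔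
      ∀ k, (cip u (f k) * cip (f k) w).re = 0 := by
  rw [LinearMap.mem_ker, Matrix.mulVecLin_apply, funext_iff]
  constructor
  · intro h k; have := h k; rwa [Amat_mulVec_apply] at this
  · intro h k; rw [Amat_mulVec_apply]; exact h k

lemma re_mul_conj_comm (a b : ℂ) :
    (a * (starRingEnd ℂ) b).re = (b * (starRingEnd ℂ) a).re := by
  simp only [Complex.mul_re, Complex.conj_re, Complex.conj_im]
  ring

lemma polar (a b : ℂ) :
    ((a - b) * (starRingEnd ℂ) (a + b)).re = Complex.normSq a - Complex.normSq b := by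
  simp only [Complex.normSq_apply, Complex.mul_re, Complex.sub_re, Complex.add_re,
    Complex.sub_im, Complex.add_im, Complex.conj_re, Complex.conj_im]
  ring

lemma Jmem (f : Fin m → Fin n → ℂ) (u : Fin n → ℂ) :
    iotaR (Complex.I • u) ∈ LinearMap.ker (Amat f (iotaR u)).mulVecLin := by
  rw [mem_ker_Amat]
  intro k
  rw [cip_smul_right, Complex.conj_I, cip_conj]
  simp only [Complex.mul_re, Complex.mul_im, Complex.neg_re, Complex.neg_im,
    Complex.I_re, Complex.I_im, Complex.conj_re, Complex.conj_im]
  ring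

lemma coe_mul_I_smul (t : ℝ) (u : Fin n → ℂ) :
    ((t : ℂ) * Complex.I) • u = t • (Complex.I • u) := by
  funext j
  simp [Complex.real_smul, mul_assoc]

/-- The key linear-algebraic reformulation of the rank condition. -/
lemma key (f : Fin m → Fin n → ℂ) (u : Fin n → ℂ) (hu : u ≠ 0) :
    (Rmat f (iotaR u)).rank = 2 * n - 1 ↔
      LinearMap.ker (Amat f (iotaR u)).mulVecLin
        = Submodule.span ℝ {iotaR (Complex.I • u)} := by
  have hn : 0 < n := by
    rcases Nat.eq_zero_or_pos n with h | h
    · subst h; exact absurd (Subsingleton.elim u 0) hu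
    · exact h
  have hJne : iotaR (Complex.I • u) ≠ 0 := by
    intro h
    apply hu
    have h2 : Complex.I • u = 0 := iotaR_inj (by rw [h, iotaR_zero])
    simpa [Complex.I_ne_zero] using (smul_eq_zero.mp h2)
  have hrk : (Rmat f (iotaR u)).rank = (Amat f (iotaR u)).rank := by
    rw [Rmat_eq]; exact Matrix.rank_transpose_mul_self _
  have hrn := rank_nullity_Amat f (iotaR u)
  constructor
  · intro hr
    have hfr : Module.finrank ℝ (LinearMap.ker (Amat f (iotaR u)).mulVecLin) = 1 := by
      rw [hrk] at hr; omega
    have hle : Submodule.span ℝ {iotaR (Complex.I • u)}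
        ≤ LinearMap.ker (Amat f (iotaR u)).mulVecLin := by
      rw [Submodule.span_le, Set.singleton_subset_iff]
      exact Jmem f u
    exact (Submodule.eq_of_le_of_finrank_eq hle
      (by rw [finrank_span_singleton hJne, hfr])).symm
  · intro hker
    have hfr : Module.finrank ℝ (LinearMap.ker (Amat f (iotaR u)).mulVecLin) = 1 := by
      rw [hker]; exact finrank_span_singleton hJne
    rw [hrk]; omega

end Aux

/-- `α` is injective up to a global phase iff for every nonzero
`ξ ∈ ℝ²ⁿ` the matrix `R(ξ)` has rank exactly `2n − 1`. -/
theorem stmt1 (n m : ℕ) (f : Fin m → Fin n → ℂ)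
    (hspan : Submodule.span ℂ (Set.range f) = ⊤) :
    InjUpToPhase f ↔
      ∀ ξ : Fin n ⊕ Fin n → ℝ, ξ ≠ 0 → (Rmat f ξ).rank = 2 * n - 1 := by
  constructor
  · -- injectivity implies the rank condition
    intro hinj ξ hξ
    obtain ⟨u, rfl⟩ : ∃ u, iotaR u = ξ := ⟨toC ξ, iotaR_toC ξ⟩
    have hu : u ≠ 0 := fun h => hξ (by rw [h, iotaR_zero])
    rw [key f u hu]
    refine le_antisymm ?_ ?_
    · -- ker ≤ span
      intro w' hw'
      obtain ⟨w, rfl⟩ : ∃ w, iotaR w = w' := ⟨toC w', iotaR_toC w'⟩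
      rw [mem_ker_Amat] at hw'
      have halpha : alphaMap f ((2 : ℂ)⁻¹ • (u + w)) = alphaMap f ((2 : ℂ)⁻¹ • (u - w)) := by
        funext k
        have hsub : cip ((2 : ℂ)⁻¹ • (u + w)) (f k) - cip ((2 : ℂ)⁻¹ • (u - w)) (f k)
            = cip w (f k) := by
          rw [cip_smul_left, cip_smul_left, cip_add_left, cip_sub_left]; ring
        have hadd : cip ((2 : ℂ)⁻¹ • (u + w)) (f k) + cip ((2 : ℂ)⁻¹ • (u - w)) (f k)
            = cip u (f k) := by
          rw [cip_smul_left, cip_smul_left, cip_add_left, cip_sub_left]; ring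
        have hp := polar (cip ((2 : ℂ)⁻¹ • (u + w)) (f k)) (cip ((2 : ℂ)⁻¹ • (u - w)) (f k))
        rw [hsub, hadd] at hp
        have h0 : (cip w (f k) * (starRingEnd ℂ) (cip u (f k))).re = 0 := by
          rw [re_mul_conj_comm]
          have hk := hw' k
          rwa [show cip (f k) w = (starRingEnd ℂ) (cip w (f k)) from cip_conj w (f k)] at hk
        have : Complex.normSq (cip ((2 : ℂ)⁻¹ • (u + w)) (f k))
            = Complex.normSq (cip ((2 : ℂ)⁻¹ • (u - w)) (f k)) := by linarith [hp, h0]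
        simpa [alphaMap] using this
      obtain ⟨c, hc, hcy⟩ := hinj _ _ halpha
      have h2 : u - w = c • (u + w) := by
        funext j
        have hj := congrFun hcy j
        simp only [Pi.smul_apply, Pi.sub_apply, Pi.add_apply, smul_eq_mul] at hj ⊢
        linear_combination (2 : ℂ) * hj
      by_cases hc1 : c = -1
      · exfalso
        apply hu
        funext j
        have hj := congrFun h2 j
        simp only [hc1, Pi.smul_apply, Pi.sub_apply, Pi.add_apply, smul_eq_mul] at hj
        have : (2 : ℂ) * u j = 0 := by linear_combination hj
        simpa using this
      · have hc0 : (1 : ℂ) + c ≠ 0 := fun h => hc1 (by linear_combination h)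
        have h3 : ∀ j, (1 - c) * u j = (1 + c) * w j := by
          intro j
          have hj := congrFun h2 j
          simp only [Pi.smul_apply, Pi.sub_apply, Pi.add_apply, smul_eq_mul] at hj
          linear_combination hj
        set d : ℂ := (1 - c) / (1 + c) with hd_def
        have hw_eq : w = d • u := by
          funext j
          have hj := h3 j
          simp only [Pi.smul_apply, smul_eq_mul, hd_def]
          field_simp
          linear_combination -hj
        have hns : Complex.normSq c = 1 := by
          rw [Complex.normSq_eq_norm_sq, hc]; norm_num
        have hdre : d.re = 0 := by
          rw [hd_def, Complex.div_re, ← add_div]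
          have hnum : (1 - c).re * (1 + c).re + (1 - c).im * (1 + c).im = 0 := by
            simp only [Complex.sub_re, Complex.add_re, Complex.sub_im, Complex.add_im,
              Complex.one_re, Complex.one_im]
            rw [Complex.normSq_apply] at hns
            nlinarith [hns]
          rw [hnum, zero_div]
        have hd : d = (d.im : ℂ) * Complex.I := by
          apply Complex.ext <;> simp [hdre]
        have hw2 : w = d.im • (Complex.I • u) := by
          conv_lhs => rw [hw_eq, hd]
          rw [coe_mul_I_smul]
        rw [Submodule.mem_span_singleton]
        exact ⟨d.im, by rw [← iotaR_real_smul, ← hw2]⟩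
    · -- span ≤ ker
      rw [Submodule.span_le, Set.singleton_subset_iff]
      exact Jmem f u
  · -- the rank condition implies injectivity
    intro hrank x y hxy
    by_cases h0 : x + y = 0
    · refine ⟨-1, by norm_num, ?_⟩
      funext j
      have hj := congrFun h0 j
      simp only [Pi.add_apply, Pi.zero_apply] at hj
      simp only [Pi.smul_apply, smul_eq_mul]
      linear_combination hj
    · have hξ : iotaR (x + y) ≠ 0 := fun h => h0 (iotaR_inj (h.trans iotaR_zero.symm))
      have hker := (key f (x + y) h0).mp (hrank _ hξ)
      have hwmem : iotaR (x - y) ∈ LinearMap.ker (Amat f (iotaR (x + y))).mulVecLin := by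
        rw [mem_ker_Amat]
        intro k
        have hk : Complex.normSq (cip x (f k)) = Complex.normSq (cip y (f k)) :=
          congrFun hxy k
        have hp := polar (cip x (f k)) (cip y (f k))
        rw [← cip_sub_left, ← cip_add_left, hk, sub_self] at hp
        rw [show cip (f k) (x - y) = (starRingEnd ℂ) (cip (x - y) (f k)) from
          cip_conj (x - y) (f k), re_mul_conj_comm]
        exact hp
      rw [hker, Submodule.mem_span_singleton] at hwmem
      obtain ⟨t, ht⟩ := hwmem
      have hxy2 : x - y = ((t : ℂ) * Complex.I) • (x + y) := by
        apply iotaR_inj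
        rw [coe_mul_I_smul, iotaR_real_smul, ht]
      set μ : ℂ := (t : ℂ) * Complex.I with hμ
      have hμre : μ.re = 0 := by simp [hμ]
      have h1p : (1 : ℂ) + μ ≠ 0 := by
        intro h
        have := congrArg Complex.re h
        simp [hμre] at this
      have hyx : y = ((1 - μ) / (1 + μ)) • x := by
        funext j
        have hj := congrFun hxy2 j
        simp only [Pi.sub_apply, Pi.smul_apply, Pi.add_apply, smul_eq_mul] at hj ⊢
        field_simp
        linear_combination -hj
      refine ⟨(1 - μ) / (1 + μ), ?_, hyx⟩
      have habs : ‖1 - μ‖ = ‖1 + μ‖ := by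
        rw [Complex.norm_def, Complex.norm_def]
        congr 1
        simp only [Complex.normSq_apply, Complex.sub_re, Complex.add_re, Complex.sub_im,
          Complex.add_im, Complex.one_re, Complex.one_im, hμre]
        ring
      rw [norm_div, habs, div_self]
      exact norm_ne_zero_iff.mpr h1p

end
end

section
/- Let a₀ > 0 and suppose that for every ξ ∈ ℝ^{2n}, R(ξ) ⪰ a₀( ‖ξ‖² I − Jξξᵀ Jᵀ ) in the sense of quadratic forms. Let z₀ ∈ ℂⁿ with ‖z₀‖ = 1 and let x ∈ ℂⁿ satisfy ⟨x,z₀⟩ real and positive. Set ζ = ι(x), ψ₀ = ι(z₀), and Π = I − Jψ₀ψ₀ᵀJᵀ (the orthogonal projection onto the orthogonal complement of Jψ₀ in ℝ^{2n}). Then Π R(ζ) Π ⪰ a₀ · ⟨x,z₀⟩² · Π. -/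
open scoped BigOperators ComplexConjugate
open Matrix

noncomputable section

-- helper lemmas

lemma vmv_transpose {α : Type*} (u v : α → ℝ) :
    (Matrix.vecMulVec u v)ᵀ = Matrix.vecMulVec v u := by
  ext i j
  simp [Matrix.vecMulVec_apply, mul_comm]

lemma vmv_mulVec {α : Type*} [Fintype α] (u v w : α → ℝ) :
    Matrix.vecMulVec u v *ᵥ w = (v ⬝ᵥ w) • u := by
  ext i
  simp only [Matrix.mulVec, dotProduct, Matrix.vecMulVec_apply, Pi.smul_apply,
    smul_eq_mul, Finset.sum_mul]
  exact Finset.sum_congr rfl fun j _ => by ring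

lemma JVJ_mulVec {n : ℕ} (u v : Fin n ⊕ Fin n → ℝ) :
    (Jmat n * Matrix.vecMulVec u u * (Jmat n)ᵀ) *ᵥ v
      = ((Jmat n *ᵥ u) ⬝ᵥ v) • (Jmat n *ᵥ u) := by
  rw [Matrix.mul_assoc, ← Matrix.mulVec_mulVec, ← Matrix.mulVec_mulVec, vmv_mulVec,
    Matrix.mulVec_smul, Matrix.dotProduct_mulVec, Matrix.vecMul_transpose]

lemma Jmat_mulVec_s15 {n : ℕ} (a : Fin n ⊕ Fin n → ℝ) :
    Jmat n *ᵥ a = Sum.elim (fun j => -(a (Sum.inr j))) (fun j => a (Sum.inl j)) := by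
  ext i
  cases i with
  | inl j =>
      simp [Jmat, Matrix.mulVec, dotProduct, Fintype.sum_sum_type,
        Matrix.one_apply, Finset.sum_ite_eq']
  | inr j =>
      simp [Jmat, Matrix.mulVec, dotProduct, Fintype.sum_sum_type,
        Matrix.one_apply, Finset.sum_ite_eq']

lemma Jmat_dot {n : ℕ} (a b : Fin n ⊕ Fin n → ℝ) :
    (Jmat n *ᵥ a) ⬝ᵥ (Jmat n *ᵥ b) = a ⬝ᵥ b := by
  simp [Jmat_mulVec_s15, dotProduct, Fintype.sum_sum_type, add_comm]

lemma dot_iota {n : ℕ} (x y : Fin n → ℂ) :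
    iotaR x ⬝ᵥ iotaR y = (cip x y).re := by
  simp only [iotaR, dotProduct, Fintype.sum_sum_type, Sum.elim_inl, Sum.elim_inr,
    cip, Complex.re_sum]
  rw [← Finset.sum_add_distrib]
  refine Finset.sum_congr rfl fun j _ => ?_
  simp [Complex.mul_re]

lemma PhiMat_transpose {n : ℕ} (fk : Fin n → ℂ) : (PhiMat fk)ᵀ = PhiMat fk := by
  simp [PhiMat, Matrix.transpose_add, Matrix.transpose_mul, vmv_transpose, Matrix.mul_assoc]

lemma Rmat_transpose {n m : ℕ} (f : Fin m → Fin n → ℂ) (ξ : Fin n ⊕ Fin n → ℝ) :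
    (Rmat f ξ)ᵀ = Rmat f ξ := by
  rw [Rmat, Matrix.transpose_sum]
  refine Finset.sum_congr rfl fun k _ => ?_
  simp [Matrix.transpose_mul, PhiMat_transpose, vmv_transpose, Matrix.mul_assoc]

/-- Suppose `R(ξ) ⪰ a₀(‖ξ‖² I − Jξξᵀ Jᵀ)` for all `ξ`, with `a₀ > 0`.
Let `‖z₀‖ = 1` and let `x` satisfy `⟨x,z₀⟩` real and positive. With `ζ = ι(x)`, `ψ₀ = ι(z₀)`
and `Π = I − Jψ₀ψ₀ᵀJᵀ`, one has `Π R(ζ) Π ⪰ a₀ ⟨x,z₀⟩² Π`. -/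
theorem stmt15 (n m : ℕ) (f : Fin m → Fin n → ℂ)
    (hspan : Submodule.span ℂ (Set.range f) = ⊤)
    (a₀ : ℝ) (ha₀ : 0 < a₀)
    (hR : ∀ ξ : Fin n ⊕ Fin n → ℝ,
      (Rmat f ξ - a₀ • ((∑ i, ξ i ^ 2) • (1 : Matrix (Fin n ⊕ Fin n) (Fin n ⊕ Fin n) ℝ)
          - Jmat n * Matrix.vecMulVec ξ ξ * (Jmat n)ᵀ)).PosSemidef)
    (z₀ x : Fin n → ℂ) (hz₀ : cnSq z₀ = 1)
    (him : (cip x z₀).im = 0) (hre : 0 < (cip x z₀).re) :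
    ((1 - Jmat n * Matrix.vecMulVec (iotaR z₀) (iotaR z₀) * (Jmat n)ᵀ)
          * Rmat f (iotaR x)
          * (1 - Jmat n * Matrix.vecMulVec (iotaR z₀) (iotaR z₀) * (Jmat n)ᵀ)
        - (a₀ * (cip x z₀).re ^ 2) •
            (1 - Jmat n * Matrix.vecMulVec (iotaR z₀) (iotaR z₀) * (Jmat n)ᵀ)).PosSemidef := by
  classical
  set ψ : Fin n ⊕ Fin n → ℝ := iotaR z₀ with hψ
  set ζ : Fin n ⊕ Fin n → ℝ := iotaR x with hζ
  set P : Matrix (Fin n ⊕ Fin n) (Fin n ⊕ Fin n) ℝ :=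
    1 - Jmat n * Matrix.vecMulVec ψ ψ * (Jmat n)ᵀ with hP
  set R := Rmat f ζ with hRdef
  set r : ℝ := (cip x z₀).re with hr
  set N : ℝ := ∑ i, ζ i ^ 2 with hN
  -- basic scalar facts
  have hψψ : ψ ⬝ᵥ ψ = 1 := by
    rw [hψ, dot_iota]
    have h1 : cip z₀ z₀ = (cnSq z₀ : ℂ) := by
      rw [cip, cnSq]
      push_cast
      refine Finset.sum_congr rfl fun j _ => ?_
      rw [Complex.mul_conj]
    rw [h1, hz₀]
    simp
  have hζψ : ζ ⬝ᵥ ψ = r := by rw [hζ, hψ, dot_iota, hr]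
  have hζζ : ζ ⬝ᵥ ζ = N := by simp [dotProduct, hN, sq]
  set ψ' : Fin n ⊕ Fin n → ℝ := Jmat n *ᵥ ψ with hψ'
  set ζ' : Fin n ⊕ Fin n → ℝ := Jmat n *ᵥ ζ with hζ'
  have hψ'ψ' : ψ' ⬝ᵥ ψ' = 1 := by rw [hψ', Jmat_dot, hψψ]
  have hζ'ψ' : ζ' ⬝ᵥ ψ' = r := by rw [hζ', hψ', Jmat_dot, hζψ]
  have hζ'ζ' : ζ' ⬝ᵥ ζ' = N := by rw [hζ', Jmat_dot, hζζ]
  have hPT : Pᵀ = P := by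
    rw [hP]
    simp [Matrix.transpose_sub, Matrix.transpose_mul, vmv_transpose, Matrix.mul_assoc]
  have hPact : ∀ v, P *ᵥ v = v - (ψ' ⬝ᵥ v) • ψ' := by
    intro v
    rw [hP, Matrix.sub_mulVec, Matrix.one_mulVec, JVJ_mulVec, hψ']
  rw [Matrix.posSemidef_iff_dotProduct_mulVec]
  constructor
  · -- Hermitian
    rw [Matrix.IsHermitian, Matrix.conjTranspose_eq_transpose_of_trivial,
      Matrix.transpose_sub, Matrix.transpose_smul, Matrix.transpose_mul, Matrix.transpose_mul,
      hPT, hRdef, Rmat_transpose, Matrix.mul_assoc]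
  · intro v
    have hsv : star v = v := by
      funext i; exact star_trivial _
    rw [hsv]
    set w : Fin n ⊕ Fin n → ℝ := P *ᵥ v with hw
    set s : ℝ := ψ' ⬝ᵥ v with hs
    have hwv : w = v - s • ψ' := by rw [hw, hPact]
    have hψ'w : ψ' ⬝ᵥ w = 0 := by
      rw [hwv, dotProduct_sub, dotProduct_smul, hψ'ψ', smul_eq_mul, mul_one, hs,
        sub_self]
    have hww : w ⬝ᵥ w = v ⬝ᵥ v - s ^ 2 := by
      rw [hwv, dotProduct_sub, sub_dotProduct, sub_dotProduct,
        dotProduct_smul, smul_dotProduct, smul_dotProduct,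
        dotProduct_smul, hψ'ψ', dotProduct_comm v ψ', ← hs]
      simp [smul_eq_mul]
      ring
    have hvPv : v ⬝ᵥ P *ᵥ v = w ⬝ᵥ w := by
      rw [← hw, hww, hwv, dotProduct_sub, dotProduct_smul,
        dotProduct_comm v ψ', ← hs]
      simp only [smul_eq_mul]
      ring
    -- main term
    have hmain : v ⬝ᵥ (P * R * P) *ᵥ v = w ⬝ᵥ R *ᵥ w := by
      rw [← Matrix.mulVec_mulVec, ← Matrix.mulVec_mulVec, Matrix.dotProduct_mulVec,
        ← Matrix.mulVec_transpose, hPT, ← hw]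
    -- the hypothesis bound at ζ, evaluated at w
    have hb := (Matrix.posSemidef_iff_dotProduct_mulVec.mp (hR ζ)).2 w
    have hsw : star w = w := by funext i; exact star_trivial _
    rw [hsw] at hb
    set t : ℝ := ζ' ⬝ᵥ w with ht
    have hq : w ⬝ᵥ (Jmat n * Matrix.vecMulVec ζ ζ * (Jmat n)ᵀ) *ᵥ w = t ^ 2 := by
      rw [JVJ_mulVec, ← hζ', dotProduct_smul, dotProduct_comm w ζ', ← ht,
        smul_eq_mul, sq]
    have hb' : a₀ * (N * (w ⬝ᵥ w) - t ^ 2) ≤ w ⬝ᵥ R *ᵥ w := by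
      have : w ⬝ᵥ (Rmat f ζ - a₀ • ((∑ i, ζ i ^ 2) • (1 : Matrix (Fin n ⊕ Fin n) (Fin n ⊕ Fin n) ℝ)
          - Jmat n * Matrix.vecMulVec ζ ζ * (Jmat n)ᵀ)) *ᵥ w
          = w ⬝ᵥ R *ᵥ w - a₀ * (N * (w ⬝ᵥ w) - t ^ 2) := by
        rw [Matrix.sub_mulVec, dotProduct_sub, Matrix.smul_mulVec,
          dotProduct_smul, Matrix.sub_mulVec, dotProduct_sub,
          Matrix.smul_mulVec, dotProduct_smul, Matrix.one_mulVec, hq, ← hN,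
          ← hRdef]
        simp [smul_eq_mul]
      rw [this] at hb
      linarith
    -- Cauchy–Schwarz
    set u : Fin n ⊕ Fin n → ℝ := ζ' - r • ψ' with hu
    have huw : u ⬝ᵥ w = t := by
      rw [hu, sub_dotProduct, smul_dotProduct, hψ'w, ← ht]
      simp
    have huu : u ⬝ᵥ u = N - r ^ 2 := by
      rw [hu, dotProduct_sub, sub_dotProduct, sub_dotProduct,
        dotProduct_smul, smul_dotProduct, smul_dotProduct,
        dotProduct_smul, hζ'ζ', hζ'ψ', hψ'ψ', dotProduct_comm ψ' ζ', hζ'ψ']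
      simp [smul_eq_mul]
      ring
    have hCS : t ^ 2 ≤ (N - r ^ 2) * (w ⬝ᵥ w) := by
      have := Finset.sum_mul_sq_le_sq_mul_sq Finset.univ u w
      have h1 : u ⬝ᵥ w = ∑ i, u i * w i := rfl
      have h2 : u ⬝ᵥ u = ∑ i, u i ^ 2 := by simp [dotProduct, sq]
      have h3 : w ⬝ᵥ w = ∑ i, w i ^ 2 := by simp [dotProduct, sq]
      rw [← huw, ← huu, h1, h2, h3]
      exact this
    -- put it together
    rw [Matrix.sub_mulVec, dotProduct_sub, Matrix.smul_mulVec,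
      dotProduct_smul, hmain, hvPv, smul_eq_mul]
    nlinarith [mul_le_mul_of_nonneg_left hCS ha₀.le]
end
end
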